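/- Fix z ∈ ℝ and define the s×s differentiation matrix D = (d_{kℓ}) by d_{kk} = θ_{k,k} + z/2 on the diagonal, d_{kℓ} = θ_{k,ℓ} + z for 1 ≤ ℓ < k ≤ s, and d_{kℓ} = 0 for ℓ > k. If the symmetric part (1/2)(D + Dᵀ) is positive semidefinite, then the average dissipation rate is nonnegative: z/2 + (1/s)·∑_{i=1}^{s} 1/a_{i+1,i} ≥ 0. -/

import Mathlib

open Finset

lemma psd_diag_nonneg {n : ℕ} {M : Matrix (Fin n) (Fin n) ℝ}
    (h : M.PosSemidef) (k : Fin n) : 0 ≤ M k k := by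
  exact h.diag_nonneg

/-- If the symmetric part of the differentiation matrix `D` (built from the
DOC kernels `θ` and the shift `z`) is positive semidefinite, then the average
dissipation rate `z/2 + (1/s)·∑ 1/a_{i+1,i}` is nonnegative. -/
theorem stmt_5 (s : ℕ) (hs : 1 ≤ s)
    (a θ : ℕ → ℕ → ℝ)
    (ha : ∀ k, 1 ≤ k → k ≤ s → a (k + 1) k ≠ 0)
    (hθdiag : ∀ k, 1 ≤ k → k ≤ s → θ k k = 1 / a (k + 1) k)
    (hθ : ∀ k j, 1 ≤ j → j < k → k ≤ s →
      θ k j = -(1 / a (j + 1) j) * ∑ l ∈ Finset.Icc (j + 1) k, θ k l * a (l + 1) j)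
    (z : ℝ)
    (D : Matrix (Fin s) (Fin s) ℝ)
    (hD : ∀ k l : Fin s,
      D k l = if (l : ℕ) = (k : ℕ) then θ ((k : ℕ) + 1) ((l : ℕ) + 1) + z / 2
        else if (l : ℕ) < (k : ℕ) then θ ((k : ℕ) + 1) ((l : ℕ) + 1) + z
        else 0)
    (hpsd : (((1 : ℝ) / 2) • (D + D.transpose)).PosSemidef) :
    0 ≤ z / 2 + (1 / (s : ℝ)) * ∑ i ∈ Finset.Icc 1 s, 1 / a (i + 1) i := by
  -- each term 1/a(i+1,i) + z/2 is nonnegative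
  have key : ∀ i ∈ Finset.Icc 1 s, 0 ≤ 1 / a (i + 1) i + z / 2 := by
    intro i hi
    simp only [Finset.mem_Icc] at hi
    obtain ⟨hi1, hi2⟩ := hi
    have hlt : i - 1 < s := by omega
    set k : Fin s := ⟨i - 1, hlt⟩
    have h := psd_diag_nonneg hpsd k
    have hk : (k : ℕ) + 1 = i := by simp [k]; omega
    have hDkk : D k k = θ i i + z / 2 := by
      rw [hD k k]; simp [hk]
    have : (((1 : ℝ) / 2) • (D + D.transpose)) k k = θ i i + z / 2 := by
      simp [Matrix.smul_apply, Matrix.add_apply, Matrix.transpose_apply, hDkk]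
      ring
    rw [this, hθdiag i hi1 hi2] at h
    exact h
  have hsum : 0 ≤ ∑ i ∈ Finset.Icc 1 s, (1 / a (i + 1) i + z / 2) :=
    Finset.sum_nonneg key
  rw [Finset.sum_add_distrib, Finset.sum_const, Nat.card_Icc] at hsum
  have hs' : (0 : ℝ) < s := by exact_mod_cast hs
  have : 0 ≤ (∑ i ∈ Finset.Icc 1 s, 1 / a (i + 1) i) + s * (z / 2) := by
    simp only [Nat.add_sub_cancel] at hsum
    convert hsum using 2
    simp [nsmul_eq_mul]
  have := div_nonneg this (le_of_lt hs')
  rw [add_div] at this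
  calc (0:ℝ) ≤ _ := this
    _ = z / 2 + (1 / (s : ℝ)) * ∑ i ∈ Finset.Icc 1 s, 1 / a (i + 1) i := by
        field_simp
        ring
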